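/- (Unboundedness of the horseshoe marginal at the origin.) The horseshoe marginal density π(β) = (1/(√2 · π^(3/2))) · e^(β²/2) · Γ(0, β²/2), where Γ(0, z) = ∫_z^∞ t^(−1) e^(−t) dt, tends to +∞ as β → 0 (β ≠ 0); that is, the marginal prior on β induced by the TPB normal scale mixture with a = b = 1/2, φ = 1 is unbounded at zero. -/

import Mathlib

open MeasureTheory Real Filter

/-- The upper incomplete gamma function Γ(s, z) = ∫_z^∞ t^(s−1) e^(−t) dt. -/
noncomputable def upperGamma (s z : ℝ) : ℝ := ∫ t in Set.Ioi z, t ^ (s - 1) * Real.exp (-t)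

lemma integrableOn_aux {z : ℝ} (hz : 0 < z) :
    IntegrableOn (fun t : ℝ => t ^ ((0:ℝ) - 1) * Real.exp (-t)) (Set.Ioi z) := by
  have hg : IntegrableOn (fun t : ℝ => z⁻¹ * Real.exp (-t)) (Set.Ioi z) := by
    have := (exp_neg_integrableOn_Ioi z (b := 1) one_pos).const_mul z⁻¹
    simp only [neg_mul, one_mul] at this
    exact this
  have hcont : ContinuousOn (fun t : ℝ => t ^ ((0:ℝ) - 1) * Real.exp (-t)) (Set.Ioi z) :=
    (continuousOn_id.rpow_const (fun x hx => Or.inl (ne_of_gt (hz.trans hx)))).mul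
      ((Real.continuous_exp.comp continuous_neg).continuousOn)
  apply hg.mono' (hcont.aestronglyMeasurable measurableSet_Ioi)
  filter_upwards [ae_restrict_mem measurableSet_Ioi] with t ht
  have htpos : 0 < t := hz.trans ht
  have h1 : t ^ ((0:ℝ) - 1) = t⁻¹ := by
    rw [show (0:ℝ) - 1 = -1 by ring, Real.rpow_neg_one]
  rw [h1, norm_mul, Real.norm_eq_abs, Real.norm_eq_abs,
    abs_of_pos (inv_pos.2 htpos), abs_of_pos (Real.exp_pos _)]
  have : t⁻¹ ≤ z⁻¹ := inv_anti₀ hz ht.le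
  exact mul_le_mul_of_nonneg_right this (Real.exp_pos _).le

lemma upperGamma_nonneg {z : ℝ} (hz : 0 < z) : 0 ≤ upperGamma 0 z := by
  apply setIntegral_nonneg measurableSet_Ioi
  intro t ht
  have htpos : 0 < t := hz.trans ht
  have : (0:ℝ) < t ^ ((0:ℝ) - 1) := Real.rpow_pos_of_pos htpos _
  positivity

lemma upperGamma_lower {z : ℝ} (hz : 0 < z) (hz1 : z ≤ 1) :
    Real.exp (-1) * Real.log (1 / z) ≤ upperGamma 0 z := by
  have hint := integrableOn_aux hz
  have hsub : Set.Ioc z 1 ⊆ Set.Ioi z := Set.Ioc_subset_Ioi_self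
  have hinv : IntervalIntegrable (fun t : ℝ => t⁻¹) volume z 1 := by
    refine intervalIntegrable_inv_iff.2 (Or.inr ?_)
    rw [Set.uIcc_of_le hz1]
    intro h
    exact absurd h.1 (not_le.2 hz)
  have hinvOn : IntegrableOn (fun t : ℝ => t⁻¹) (Set.Ioc z 1) :=
    (intervalIntegrable_iff_integrableOn_Ioc_of_le hz1).1 hinv
  have step1 : (∫ t in Set.Ioc z 1, t ^ ((0:ℝ) - 1) * Real.exp (-t)) ≤ upperGamma 0 z := by
    apply setIntegral_mono_set hint ?_ (HasSubset.Subset.eventuallyLE hsub)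
    filter_upwards [ae_restrict_mem measurableSet_Ioi] with t ht
    have htpos : 0 < t := hz.trans ht
    have : (0:ℝ) < t ^ ((0:ℝ) - 1) := Real.rpow_pos_of_pos htpos _
    positivity
  have step2 : (∫ t in Set.Ioc z 1, Real.exp (-1) * t⁻¹)
      ≤ ∫ t in Set.Ioc z 1, t ^ ((0:ℝ) - 1) * Real.exp (-t) := by
    apply setIntegral_mono_on (hinvOn.const_mul _) (hint.mono_set hsub) measurableSet_Ioc
    intro t ht
    have htpos : 0 < t := hz.trans ht.1
    have h1 : t ^ ((0:ℝ) - 1) = t⁻¹ := by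
      rw [show (0:ℝ) - 1 = -1 by ring, Real.rpow_neg_one]
    rw [h1, mul_comm]
    apply mul_le_mul_of_nonneg_left _ (inv_pos.2 htpos).le
    exact Real.exp_le_exp.2 (by linarith [ht.2])
  have step3 : (∫ t in Set.Ioc z 1, Real.exp (-1) * t⁻¹)
      = Real.exp (-1) * Real.log (1 / z) := by
    rw [MeasureTheory.integral_const_mul]
    congr 1
    have h : (∫ t in Set.Ioc z 1, t⁻¹) = ∫ t in z..1, t⁻¹ := by
      rw [intervalIntegral.integral_of_le hz1]
    rw [h, integral_inv_of_pos hz one_pos]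
  rw [← step3]
  exact step2.trans step1

lemma upperGamma_tendsto : Tendsto (fun z => upperGamma 0 z) (nhdsWithin 0 (Set.Ioi 0)) atTop := by
  have hb : Tendsto (fun z : ℝ => Real.exp (-1) * Real.log (1 / z))
      (nhdsWithin 0 (Set.Ioi 0)) atTop := by
    apply Tendsto.const_mul_atTop (Real.exp_pos _)
    apply Real.tendsto_log_atTop.comp
    exact (tendsto_inv_nhdsGT_zero (𝕜 := ℝ)).congr fun z => (one_div z).symm
  apply tendsto_atTop_mono' (nhdsWithin 0 (Set.Ioi 0)) ?_ hb
  filter_upwards [Ioo_mem_nhdsGT_of_mem (by norm_num : (0:ℝ) ∈ Set.Ico 0 1)] with z hz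
  exact upperGamma_lower hz.1 hz.2.le

theorem horseshoe_marginal_unbounded_at_zero :
    Tendsto
      (fun β : ℝ => (1 / (Real.sqrt 2 * Real.pi ^ ((3 : ℝ) / 2))) * Real.exp (β ^ 2 / 2) *
        upperGamma 0 (β ^ 2 / 2))
      (nhdsWithin 0 {(0 : ℝ)}ᶜ) atTop := by
  have hc : (0:ℝ) < 1 / (Real.sqrt 2 * Real.pi ^ ((3 : ℝ) / 2)) := by
    have h2 : (0:ℝ) < Real.sqrt 2 := Real.sqrt_pos.2 (by norm_num)
    have hp : (0:ℝ) < Real.pi ^ ((3:ℝ)/2) := Real.rpow_pos_of_pos Real.pi_pos _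
    positivity
  have hcomp : Tendsto (fun β : ℝ => β ^ 2 / 2) (nhdsWithin 0 {(0:ℝ)}ᶜ)
      (nhdsWithin 0 (Set.Ioi 0)) := by
    apply tendsto_nhdsWithin_of_tendsto_nhds_of_eventually_within
    · have hco : Continuous fun β : ℝ => β ^ 2 / 2 := by continuity
      simpa using (hco.tendsto 0).mono_left nhdsWithin_le_nhds
    · filter_upwards [self_mem_nhdsWithin] with β hβ
      have hne : β ≠ 0 := hβ
      have h2 : (0:ℝ) < β ^ 2 := by positivity
      have : (0:ℝ) < β ^ 2 / 2 := by linarith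
      exact this
  have hG : Tendsto (fun β : ℝ => (1 / (Real.sqrt 2 * Real.pi ^ ((3 : ℝ) / 2))) *
      upperGamma 0 (β ^ 2 / 2)) (nhdsWithin 0 {(0:ℝ)}ᶜ) atTop :=
    (upperGamma_tendsto.comp hcomp).const_mul_atTop hc
  apply tendsto_atTop_mono' (nhdsWithin 0 {(0:ℝ)}ᶜ) ?_ hG
  filter_upwards [self_mem_nhdsWithin] with β hβ
  have hne : β ≠ 0 := hβ
  have hpos : (0:ℝ) < β ^ 2 / 2 := by positivity
  have hGnn := upperGamma_nonneg hpos
  have hexp : (1:ℝ) ≤ Real.exp (β ^ 2 / 2) := Real.one_le_exp (by positivity)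
  calc (1 / (Real.sqrt 2 * Real.pi ^ ((3 : ℝ) / 2))) * upperGamma 0 (β ^ 2 / 2)
      = (1 / (Real.sqrt 2 * Real.pi ^ ((3 : ℝ) / 2))) * 1 * upperGamma 0 (β ^ 2 / 2) := by ring
    _ ≤ (1 / (Real.sqrt 2 * Real.pi ^ ((3 : ℝ) / 2))) * Real.exp (β ^ 2 / 2) *
        upperGamma 0 (β ^ 2 / 2) := by
        apply mul_le_mul_of_nonneg_right _ hGnn
        exact mul_le_mul_of_nonneg_left hexp hc.le
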